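/- arXiv:1010.0351 — 2 statements merged into one kernel-verified Lean document; each statement's English description precedes it below -/
import Mathlib

section
/- Let T be a rigid object in C and let f : X → Y be a map in C. Then Hom_C(T, f) = 0 (i.e. f ∘ g = 0 for every map g : T → X) if and only if f factors through an object of ΣT^⊥. -/
/-!
Common setup: `C` is a Hom-finite, Krull-Schmidt (= idempotent complete, given
Hom-finiteness over a field), `k`-linear triangulated category with suspension
functor `Σ = shiftFunctor C (1 : ℤ)`, and `T` is a rigid object of `C`.
-/

noncomputable section

open CategoryTheory CategoryTheory.Limits CategoryTheory.Pretriangulated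

universe v u

namespace PaperBM

variable {C : Type u} [Category.{v} C] [Preadditive C] [HasZeroObject C]
  [HasShift C ℤ] [∀ n : ℤ, (shiftFunctor C n).Additive] [Pretriangulated C]
  [HasFiniteBiproducts C]

/-- `X` lies in `add T`: it is a direct summand of a finite direct sum of copies of `T`. -/
def memAdd (T X : C) : Prop :=
  ∃ (n : ℕ) (s : X ⟶ ⨁ (fun _ : Fin n => T)) (r : (⨁ fun _ : Fin n => T) ⟶ X), s ≫ r = 𝟙 X

/-- `T` is rigid: `Hom_C(T, ΣT) = 0`. -/
def IsRigidObj (T : C) : Prop := ∀ f : T ⟶ (shiftFunctor C (1 : ℤ)).obj T, f = 0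

/-- `Y ∈ T^⊥`, i.e. `Hom_C(X, ΣY) = 0` for all `X ∈ add T`. -/
def memTperp (T Y : C) : Prop :=
  ∀ (X : C), memAdd T X → ∀ f : X ⟶ (shiftFunctor C (1 : ℤ)).obj Y, f = 0

/-- `Y ∈ ⊥T`, i.e. `Hom_C(Y, ΣX) = 0` for all `X ∈ add T`. -/
def memPerpT (T Y : C) : Prop :=
  ∀ (X : C), memAdd T X → ∀ f : Y ⟶ (shiftFunctor C (1 : ℤ)).obj X, f = 0

/-- `Y ∈ ΣT^⊥`, the image of `T^⊥` under the suspension `Σ`. -/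
def memSigmaTperp (T Y : C) : Prop :=
  ∃ Z : C, memTperp T Z ∧ Nonempty (Y ≅ (shiftFunctor C (1 : ℤ)).obj Z)

/-- The map `f` factors through an object belonging to the class `P` of objects. -/
def FactorsThru (P : C → Prop) {A B : C} (f : A ⟶ B) : Prop :=
  ∃ (Z : C) (g : A ⟶ Z) (h : Z ⟶ B), P Z ∧ g ≫ h = f

/-- The class `S̃` of maps `f : X ⟶ Y` such that in a completion
`Σ⁻¹Z →h X →f Y →g Z` of `f` to a triangle (where `A` plays the role of `Σ⁻¹Z`,
so that `Z = ΣA`), both `g` and `h` factor through an object of `ΣT^⊥`. -/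
def Stilde (T : C) : MorphismProperty C := fun X Y f =>
  ∃ (A : C) (h : A ⟶ X) (g : Y ⟶ (shiftFunctor C (1 : ℤ)).obj A),
    (Triangle.mk h f g ∈ distTriang C) ∧
    FactorsThru (memSigmaTperp T) g ∧ FactorsThru (memSigmaTperp T) h

/-- The class `S` of maps `f : X ⟶ Y` such that in a completion
`Σ⁻¹Z →h X →f Y →g Z` of `f` to a triangle (where `A` plays the role of `Σ⁻¹Z`,
so that `Z = ΣA`), `g` factors through an object of `ΣT^⊥` and `Σ⁻¹Z ∈ ΣT^⊥`. -/
def Sclass (T : C) : MorphismProperty C := fun X Y f =>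
  ∃ (A : C) (h : A ⟶ X) (g : Y ⟶ (shiftFunctor C (1 : ℤ)).obj A),
    (Triangle.mk h f g ∈ distTriang C) ∧
    FactorsThru (memSigmaTperp T) g ∧ memSigmaTperp T A

/-- `X ∈ C(T)`: there is a triangle `T₁ → T₀ → X → ΣT₁` with `T₀, T₁ ∈ add T`. -/
def memCT (T X : C) : Prop :=
  ∃ (T₁ T₀ : C) (a : T₁ ⟶ T₀) (b : T₀ ⟶ X) (c : X ⟶ (shiftFunctor C (1 : ℤ)).obj T₁),
    memAdd T T₁ ∧ memAdd T T₀ ∧ (Triangle.mk a b c ∈ distTriang C)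

/-- `f : X₀ ⟶ Y` is a right `P`-approximation of `Y`. -/
def IsRightApprox (P : C → Prop) {X₀ Y : C} (f : X₀ ⟶ Y) : Prop :=
  P X₀ ∧ ∀ (W : C), P W → ∀ g : W ⟶ Y, ∃ g' : W ⟶ X₀, g' ≫ f = g

/-- `f : Y ⟶ X₀` is a left `P`-approximation of `Y`. -/
def IsLeftApprox (P : C → Prop) {Y X₀ : C} (f : Y ⟶ X₀) : Prop :=
  P X₀ ∧ ∀ (W : C), P W → ∀ g : Y ⟶ W, ∃ g' : X₀ ⟶ W, f ≫ g' = g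

/-- The map `f : X₀ ⟶ Y` is right minimal. -/
def IsRightMinimal {X₀ Y : C} (f : X₀ ⟶ Y) : Prop :=
  ∀ g : X₀ ⟶ X₀, g ≫ f = f → IsIso g

/-- The ring map `End (op T) → (End T)ᵐᵒᵖ`, `r ↦ op r.unop` (port helper). -/
def endOpRingHom (T : C) : End (Opposite.op T) →+* (End T)ᵐᵒᵖ where
  toFun r := MulOpposite.op r.unop
  map_one' := rfl
  map_mul' _ _ := rfl
  map_zero' := rfl
  map_add' _ _ := rfl

/-- The functor `H = Hom_C(T, -) : C ⥤ Mod End_C(T)ᵒᵖ`.  Here, with Mathlib's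
conventions, the endomorphism ring `End (Opposite.op T)` of `T` viewed in `Cᵒᵖ` plays
the role of `End_C(T)ᵒᵖ`, so that each `Hom_C(T, X)` is a left module over it. -/
abbrev homFunctor (T : C) : C ⥤ ModuleCat.{v} (End (Opposite.op T)) :=
  preadditiveCoyonedaObj T ⋙ ModuleCat.restrictScalars (endOpRingHom T)

/-- The predicate on `End_C(T)ᵒᵖ`-modules of being finite-dimensional (equivalently,
since `End_C(T)` is a finite-dimensional algebra, finitely generated). -/
abbrev isFinDim (T : C) : ModuleCat.{v} (End (Opposite.op T)) → Prop :=
  fun M => Module.Finite (End (Opposite.op T)) M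

/-- The category `mod End_C(T)ᵒᵖ` of finite-dimensional `End_C(T)ᵒᵖ`-modules. -/
abbrev fdMod (T : C) := ObjectProperty.FullSubcategory (isFinDim T)

/-- The ideal relation on `C(T)` of maps factoring through an object of `ΣT^⊥`. -/
def homRelCT (T : C) : HomRel (ObjectProperty.FullSubcategory (memCT T)) :=
  fun A B f g => FactorsThru (memSigmaTperp T) ((f.hom - g.hom : A.obj ⟶ B.obj))

/-- The ideal relation on `C(T)` of maps factoring through an object of `add ΣT`. -/
def homRelCTadd (T : C) : HomRel (ObjectProperty.FullSubcategory (memCT T)) :=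
  fun A B f g => FactorsThru (memAdd ((shiftFunctor C (1 : ℤ)).obj T)) ((f.hom - g.hom : A.obj ⟶ B.obj))

/-- The ideal relation on `C` of maps factoring through an object of `add ΣT`. -/
def homRelAdd (T : C) : HomRel C :=
  fun A B f g => FactorsThru (memAdd ((shiftFunctor C (1 : ℤ)).obj T)) (f - g)

end PaperBM

open PaperBM

section Helpers

open PaperBM

variable {C : Type u} [Category.{v} C] [Preadditive C] [HasZeroObject C]
  [HasShift C ℤ] [∀ n : ℤ, (shiftFunctor C n).Additive] [Pretriangulated C]
  [HasFiniteBiproducts C]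

/-- `T` itself lies in `add T`. -/
lemma memAdd_self (T : C) : memAdd T T :=
  ⟨1, biproduct.lift fun _ => 𝟙 T, biproduct.π _ 0, by simp⟩

/-- The biproduct of copies of `T` lies in `add T`. -/
lemma memAdd_biproduct (T : C) (n : ℕ) : memAdd T (⨁ fun _ : Fin n => T) :=
  ⟨n, 𝟙 _, 𝟙 _, by simp⟩

/-- For a rigid `T`, maps from `add T` to shifts of `add T` vanish. -/
lemma addT_hom_shift_zero (T : C) (hT : IsRigidObj T) {A B : C}
    (hA : memAdd T A) (hB : memAdd T B) (u : A ⟶ (shiftFunctor C (1 : ℤ)).obj B) :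
    u = 0 := by
  obtain ⟨m, s, r, hsr⟩ := hA
  obtain ⟨n, s', r', hsr'⟩ := hB
  let F := shiftFunctor C (1 : ℤ)
  have key : ∀ v : T ⟶ F.obj (⨁ fun _ : Fin n => T), v = 0 := by
    intro v
    have : v ≫ F.map (𝟙 _) = v := by simp
    rw [← this, ← biproduct.total, F.map_sum]
    rw [Preadditive.comp_sum]
    apply Finset.sum_eq_zero
    intro j _
    rw [F.map_comp, ← Category.assoc]
    have : v ≫ F.map (biproduct.π (fun _ : Fin n => T) j) = 0 := hT _
    rw [this, zero_comp]
  have hw : (r ≫ u ≫ F.map s' : (⨁ fun _ : Fin m => T) ⟶ _) = 0 := by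
    apply biproduct.hom_ext'
    intro i
    rw [comp_zero]
    exact key _
  have : u = s ≫ (r ≫ u ≫ F.map s') ≫ F.map r' := by
    simp only [Category.assoc]
    rw [← Functor.map_comp, hsr',
      F.map_id, Category.comp_id, ← Category.assoc, hsr, Category.id_comp]
  rw [this, hw]; simp

/-- Any map from an object of `add T` to `X` factors through the canonical
right `add T`-approximation built from a basis of `Hom(T, X)`. -/
lemma factor_through_approx {k : Type*} [Field k] [CategoryTheory.Linear k C]
    [∀ X Y : C, FiniteDimensional k (X ⟶ Y)]
    (T : C) {X A : C} (hA : memAdd T A) (g' : A ⟶ X) :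
    ∃ w : A ⟶ (⨁ fun _ : Fin (Module.finrank k (T ⟶ X)) => T),
      w ≫ biproduct.desc (fun i => Module.finBasis k (T ⟶ X) i) = g' := by
  set b := Module.finBasis k (T ⟶ X)
  set t : (⨁ fun _ : Fin (Module.finrank k (T ⟶ X)) => T) ⟶ X :=
    biproduct.desc (fun i => b i) with ht
  have basic : ∀ g : T ⟶ X, ∃ v : T ⟶ (⨁ fun _ : Fin (Module.finrank k (T ⟶ X)) => T),
      v ≫ t = g := by
    intro g
    refine ⟨biproduct.lift fun j => (b.repr g j) • 𝟙 T, ?_⟩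
    rw [ht, biproduct.lift_desc]
    calc ∑ j, ((b.repr g j) • 𝟙 T) ≫ b j = ∑ j, (b.repr g j) • b j := by
          simp [Linear.smul_comp]
      _ = g := b.sum_repr g
  obtain ⟨m, s, r, hsr⟩ := hA
  choose v hv using fun i => basic (biproduct.ι (fun _ : Fin m => T) i ≫ r ≫ g')
  refine ⟨s ≫ biproduct.desc v, ?_⟩
  have : biproduct.desc v ≫ t = r ≫ g' := by
    apply biproduct.hom_ext'
    intro i
    simp [hv i]
  rw [Category.assoc, this, ← Category.assoc, hsr, Category.id_comp]

end Helpers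

/-- For a rigid object `T` and a map `f : X ⟶ Y`, we have `Hom_C(T, f) = 0`
(i.e. `g ≫ f = 0` for every `g : T ⟶ X`) if and only if `f` factors through an
object of `ΣT^⊥`. -/
theorem statement_4 {C : Type u} [Category.{v} C] [Preadditive C] [HasZeroObject C]
    [HasShift C ℤ] [∀ n : ℤ, (shiftFunctor C n).Additive] [Pretriangulated C]
    [HasFiniteBiproducts C]
    {k : Type*} [Field k] [CategoryTheory.Linear k C]
    [∀ X Y : C, FiniteDimensional k (X ⟶ Y)] [IsIdempotentComplete C]
    (T : C) (hT : IsRigidObj T) {X Y : C} (f : X ⟶ Y) :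
    (∀ g : T ⟶ X, g ≫ f = 0) ↔ FactorsThru (memSigmaTperp T) f := by
  constructor
  · intro h
    set b := Module.finBasis k (T ⟶ X)
    set T₀ := (⨁ fun _ : Fin (Module.finrank k (T ⟶ X)) => T) with hT₀
    set t : T₀ ⟶ X := biproduct.desc (fun i => b i) with ht
    obtain ⟨Z, p, q, hdist⟩ := Pretriangulated.distinguished_cocone_triangle t
    have htf : t ≫ f = 0 := by
      apply biproduct.hom_ext'
      intro i
      simp [ht, h]
    obtain ⟨u, hu⟩ := Pretriangulated.Triangle.yoneda_exact₂ _ hdist f htf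
    have htp : t ≫ p = 0 := Pretriangulated.comp_distTriang_mor_zero₁₂ _ hdist
    have hZ : ∀ (T' : C), memAdd T T' → ∀ g : T' ⟶ Z, g = 0 := by
      intro T' hT' g
      have hgq : g ≫ q = 0 :=
        addT_hom_shift_zero T hT hT' (memAdd_biproduct T _) (g ≫ q)
      obtain ⟨g', hg'⟩ := Pretriangulated.Triangle.coyoneda_exact₃ _ hdist g hgq
      obtain ⟨w, hw⟩ := factor_through_approx (k := k) (X := X) T hT' g'
      rw [hg']
      show g' ≫ p = 0
      rw [← hw]
      exact (Category.assoc w t p).trans (by rw [htp, comp_zero])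
    refine ⟨Z, p, u, ⟨(shiftFunctor C (-1 : ℤ)).obj Z, ?_, ?_⟩, hu.symm⟩
    · intro X' hX' g
      have h0 : g ≫ ((shiftFunctorCompIsoId C (-1 : ℤ) (1 : ℤ) (by ring)).app Z).hom = 0 :=
        hZ X' hX' _
      calc g = (g ≫ ((shiftFunctorCompIsoId C (-1 : ℤ) (1 : ℤ) (by ring)).app Z).hom) ≫
            ((shiftFunctorCompIsoId C (-1 : ℤ) (1 : ℤ) (by ring)).app Z).inv := by simp
        _ = 0 := by rw [h0, zero_comp]
    · exact ⟨((shiftFunctorCompIsoId C (-1 : ℤ) (1 : ℤ) (by ring)).app Z).symm⟩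
  · rintro ⟨Z', a, c, ⟨W, hW, ⟨e⟩⟩, hac⟩ g
    have h1 : (g ≫ a) ≫ e.hom = 0 := hW T (memAdd_self T) _
    have h2 : g ≫ a = 0 := by
      calc g ≫ a = ((g ≫ a) ≫ e.hom) ≫ e.inv := by simp
        _ = 0 := by rw [h1, zero_comp]
    rw [← hac, ← Category.assoc, h2, zero_comp]
end
end

section
/- Let T be a rigid object in C, let U be an object of C(T), let u : U → Y be a map in C and let s : X → Y be a map in the class S. Then u factors through s, i.e. there exists h : U → X with u = s ∘ h. -/
/-!
Common setup: `C` is a Hom-finite, Krull-Schmidt (= idempotent complete, given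
Hom-finiteness over a field), `k`-linear triangulated category with suspension
functor `Σ = shiftFunctor C (1 : ℤ)`, and `T` is a rigid object of `C`.
-/

noncomputable section

open CategoryTheory CategoryTheory.Limits CategoryTheory.Pretriangulated

universe v u

open PaperBM

/-- If `U ∈ C(T)`, `u : U ⟶ Y` and `s : X ⟶ Y` belongs to `S`, then `u` factors
through `s`. -/
theorem statement_12 {C : Type u} [Category.{v} C] [Preadditive C] [HasZeroObject C]
    [HasShift C ℤ] [∀ n : ℤ, (shiftFunctor C n).Additive] [Pretriangulated C]
    [HasFiniteBiproducts C]
    {k : Type*} [Field k] [CategoryTheory.Linear k C]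
    [∀ X Y : C, FiniteDimensional k (X ⟶ Y)] [IsIdempotentComplete C]
    (T : C) (hT : IsRigidObj T) {U X Y : C} (hU : memCT T U)
    (u : U ⟶ Y) (s : X ⟶ Y) (hs : Sclass T s) :
    ∃ h : U ⟶ X, h ≫ s = u := by
  obtain ⟨A, h, g, hTri, ⟨Z, p, q, ⟨Z', hZ', ⟨e⟩⟩, hpq⟩, ⟨A', hA', ⟨e₂⟩⟩⟩ := hs
  obtain ⟨T₁, T₀, a, b, c, hT₁, hT₀, hTriU⟩ := hU
  -- Step 1: u ≫ g = 0
  have hug : u ≫ g = 0 := by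
    -- write u ≫ g through Z ≅ ΣZ'
    have hbp : b ≫ (u ≫ p ≫ e.hom) = 0 := by
      have := hZ' T₀ hT₀ (b ≫ u ≫ p ≫ e.hom)
      simpa using this
    obtain ⟨w, hw⟩ : ∃ w : (shiftFunctor C (1 : ℤ)).obj T₁ ⟶ (shiftFunctor C (1 : ℤ)).obj Z',
        u ≫ p ≫ e.hom = c ≫ w := Triangle.yoneda_exact₃ _ hTriU (u ≫ p ≫ e.hom)
      (by exact hbp)
    -- now w ≫ e.inv ≫ q : T₁⟦1⟧ ⟶ ΣA, A ≅ ΣA'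
    have hr : (w ≫ e.inv ≫ q) ≫ (shiftFunctor C (1 : ℤ)).map e₂.hom = 0 := by
      set r := (w ≫ e.inv ≫ q) ≫ (shiftFunctor C (1 : ℤ)).map e₂.hom with hrdef
      have : (shiftFunctor C (1 : ℤ)).map ((shiftFunctor C (1 : ℤ)).preimage r) = r :=
        Functor.map_preimage _ _
      have h0 : (shiftFunctor C (1 : ℤ)).preimage r = 0 := hA' T₁ hT₁ _
      rw [← this, h0, Functor.map_zero]
    have hwq : w ≫ e.inv ≫ q = 0 := by
      have := congrArg (fun x => x ≫ (shiftFunctor C (1 : ℤ)).map e₂.inv) hr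
      simpa [← Functor.map_comp] using this
    calc u ≫ g = u ≫ p ≫ q := by rw [hpq]
      _ = (u ≫ p ≫ e.hom) ≫ e.inv ≫ q := by simp
      _ = c ≫ (w ≫ e.inv ≫ q) := by rw [hw]; simp [Pretriangulated.Triangle.mk]
      _ = 0 := by rw [hwq, comp_zero]
  obtain ⟨h', hh'⟩ := Triangle.coyoneda_exact₃ _ hTri u hug
  exact ⟨h', hh'.symm⟩
end
end
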